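/- If f : R → F is a multiplicative polynomial map on a finite-dimensional unital algebra R over an infinite field F (i.e., f(ab) = f(a)f(b) for all a, b ∈ R) with f not identically zero, then f is homogeneous of some degree k and f(1) = 1. -/

import Mathlib

/-- `f : R → F` is a polynomial map with respect to the finite basis `b`:
it is given by a polynomial in the coordinates. -/
def IsPolyMap {F R ι : Type*} [Field F] [AddCommGroup R] [Module F R] [Fintype ι]
    (b : Module.Basis ι F R) (f : R → F) : Prop :=
  ∃ p : MvPolynomial ι F, ∀ r : R, f r = MvPolynomial.eval (fun i => b.repr r i) p

open Polynomial in
lemma coeff_comp_C_mul_X {F : Type*} [CommRing F] (q : F[X]) (y : F) (n : ℕ) :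
    (q.comp (C y * X)).coeff n = q.coeff n * y ^ n := by
  induction q using Polynomial.induction_on' with
  | add p q hp hq => simp [add_comp, hp, hq, add_mul]
  | monomial i a =>
    simp only [monomial_comp, coeff_monomial, mul_pow, ← C_pow, smul_eq_C_mul, ← mul_assoc,
      ← C_mul, coeff_C_mul, coeff_X_pow]
    split_ifs with h h' h'
    · subst h; ring
    · exact absurd h.symm h'
    · exact absurd h'.symm h
    · ring

open Polynomial in
lemma mult_poly_eval {F : Type*} [Field F] [Infinite F] (q : F[X])
    (hmul : ∀ x y : F, q.eval (x * y) = q.eval x * q.eval y) (h1 : q.eval 1 = 1) :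
    ∀ α : F, q.eval α = α ^ q.natDegree := by
  have hq0 : q ≠ 0 := fun h => by simp [h] at h1
  intro α
  have heq : q.comp (C α * X) = C (q.eval α) * q := by
    apply Polynomial.funext; intro x
    simp [eval_comp, ← hmul, mul_comm α x]
  have h2 := congrArg (fun p => p.coeff q.natDegree) heq
  simp only [coeff_comp_C_mul_X, coeff_C_mul, coeff_natDegree] at h2
  have hl : q.leadingCoeff ≠ 0 := Polynomial.leadingCoeff_ne_zero.mpr hq0
  rw [mul_comm] at h2
  exact (mul_right_cancel₀ hl h2).symm

/-- If `f : R → F` is a multiplicative polynomial map on a finite-dimensional unital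
(not necessarily associative) algebra `R` over an infinite field `F`, not identically zero,
then `f` is homogeneous of some degree `k` and `f 1 = 1`. -/
theorem stmt0 {F R ι : Type*} [Field F] [Infinite F] [NonAssocRing R] [Module F R]
    [SMulCommClass F R R] [IsScalarTower F R R] [Fintype ι]
    (b : Module.Basis ι F R) (f : R → F) (hpoly : IsPolyMap b f)
    (hmul : ∀ x y : R, f (x * y) = f x * f y) (hne : f ≠ 0) :
    (∃ k : ℕ, ∀ (α : F) (r : R), f (α • r) = α ^ k * f r) ∧ f 1 = 1 := by
  obtain ⟨r0, hr0⟩ : ∃ r : R, f r ≠ 0 := by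
    by_contra h; push_neg at h; exact hne (funext h)
  have hf1 : f 1 = 1 := by
    have h := hmul r0 1
    rw [mul_one] at h
    have h' : f r0 * f 1 = f r0 * 1 := by rw [mul_one, ← h]
    exact mul_left_cancel₀ hr0 h'
  refine ⟨?_, hf1⟩
  obtain ⟨p, hp⟩ := hpoly
  set g : ι → Polynomial F := fun i => Polynomial.C (b.repr 1 i) * Polynomial.X with hg
  set q : Polynomial F := MvPolynomial.aeval g p with hq
  have hqeval : ∀ α : F, q.eval α = f (α • (1 : R)) := by
    intro α
    rw [← Polynomial.coe_aeval_eq_eval, hq, MvPolynomial.comp_aeval_apply]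
    rw [hp (α • (1 : R))]
    have hrepr : (fun i => (b.repr (α • (1 : R))) i) = fun i => b.repr 1 i * α := by
      funext i; rw [map_smul]; simp [smul_eq_mul, mul_comm]
    rw [hrepr]
    have hgi : (fun i => Polynomial.aeval α (g i)) = fun i => b.repr 1 i * α := by
      funext i; simp [hg]
    rw [hgi, MvPolynomial.aeval_def, Algebra.algebraMap_self]
    rfl
  have hsm : ∀ α β : F, (α • (1 : R)) * (β • (1 : R)) = (α * β) • (1 : R) := by
    intro α β
    rw [smul_mul_assoc, mul_smul_comm, one_mul, smul_smul]
  have hqmul : ∀ x y : F, q.eval (x * y) = q.eval x * q.eval y := by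
    intro x y
    rw [hqeval, hqeval, hqeval, ← hmul, hsm]
  have hq1 : q.eval 1 = 1 := by rw [hqeval, one_smul, hf1]
  refine ⟨q.natDegree, fun α r => ?_⟩
  have : α • r = (α • (1 : R)) * r := by rw [smul_mul_assoc, one_mul]
  rw [this, hmul, ← hqeval, mult_poly_eval q hqmul hq1]
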